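/- Assume A is generic, m ≤ r-n+1, 1 ≤ j ≤ n, and let H ∈ A^{(n-j)}. Choose A' ⊆ A with |A'| = m+n-1 and H ⊆ A'. Then {δ_{H∪H'}^m : H' ∈ (A'\H)^{(j-1)}} is a K-basis of Δ_H := Σ_{H' ∈ (A\H)^{(j-1)}} K·δ_{H∪H'}^m, and dim_K Δ_H = binom(m+j-1, j-1). -/

import Mathlib

open MvPolynomial

/-- The linear form `Σ v_j x_j` with coefficient vector `v`. -/
noncomputable def lf {K : Type*} [Field K] {n : ℕ} (v : Fin n → K) :
    MvPolynomial (Fin n) K :=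
  ∑ j, MvPolynomial.C (v j) * MvPolynomial.X j

/-- `∂^α = ∂_1^{α_1} ⋯ ∂_n^{α_n}` as a `K`-linear endomorphism of the polynomial ring. -/
noncomputable def pdOp (K : Type*) [Field K] (n : ℕ) (α : Fin n → ℕ) :
    Module.End K (MvPolynomial (Fin n) K) :=
  (List.ofFn fun j : Fin n =>
    ((MvPolynomial.pderiv j).toLinearMap : Module.End K (MvPolynomial (Fin n) K)) ^ (α j)).prod

/-- The constant coefficient derivation `Σ d_j ∂_j`. -/
noncomputable def delOp (K : Type*) [Field K] (n : ℕ) (d : Fin n → K) :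
    Module.End K (MvPolynomial (Fin n) K) :=
  ∑ j, d j • ((MvPolynomial.pderiv j).toLinearMap : Module.End K (MvPolynomial (Fin n) K))

/-- The `S`-module of differential operators homogeneous of order `m`,
i.e. `S`-linear combinations of the `∂^α` with `|α| = m`. -/
noncomputable def homOrder (K : Type*) [Field K] (n m : ℕ) :
    Submodule (MvPolynomial (Fin n) K) (Module.End K (MvPolynomial (Fin n) K)) :=
  Submodule.span (MvPolynomial (Fin n) K)
    {θ | ∃ α : Fin n → ℕ, (∑ j, α j) = m ∧ θ = pdOp K n α}

/-- The operators preserving the principal ideal `QS`. -/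
noncomputable def presIdeal (K : Type*) [Field K] (n : ℕ) (Q : MvPolynomial (Fin n) K) :
    Submodule (MvPolynomial (Fin n) K) (Module.End K (MvPolynomial (Fin n) K)) where
  carrier := {θ | ∀ f, Q ∣ f → Q ∣ θ f}
  add_mem' := by
    intro θ₁ θ₂ h₁ h₂ f hf
    simpa using dvd_add (h₁ f hf) (h₂ f hf)
  zero_mem' := by intro f hf; simp
  smul_mem' := by
    intro c θ hθ f hf
    simpa [smul_eq_mul] using Dvd.dvd.mul_left (hθ f hf) c

/-- `D^{(m)}(𝒜)`, for the arrangement defined by `Q`. -/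
noncomputable def Dmod (K : Type*) [Field K] (n : ℕ) (Q : MvPolynomial (Fin n) K) (m : ℕ) :
    Submodule (MvPolynomial (Fin n) K) (Module.End K (MvPolynomial (Fin n) K)) :=
  homOrder K n m ⊓ presIdeal K n Q

/-- The Euler operator of order `m`. -/
noncomputable def euler (K : Type*) [Field K] (n m : ℕ) :
    Module.End K (MvPolynomial (Fin n) K) :=
  ∑ α ∈ Finset.Nat.antidiagonalTuple n m,
    ((Nat.multinomial Finset.univ α : MvPolynomial (Fin n) K) *
      ∏ j, MvPolynomial.X j ^ α j) • pdOp K n α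

/-- `θ` is homogeneous (of order `m`) of polynomial degree `p`. -/
def homogOfPdeg (K : Type*) [Field K] (n m p : ℕ)
    (θ : Module.End K (MvPolynomial (Fin n) K)) : Prop :=
  ∃ c : (Fin n → ℕ) → MvPolynomial (Fin n) K,
    (∀ α, (c α).IsHomogeneous p) ∧
    θ = ∑ α ∈ Finset.Nat.antidiagonalTuple n m, c α • pdOp K n α

/-- A generic arrangement: any `n` of the defining linear forms are linearly independent. -/
def Generic {K : Type*} [Field K] {n r : ℕ} (a : Fin r → (Fin n → K)) : Prop :=
  ∀ s : Finset (Fin r), s.card = n → LinearIndependent K (fun i : s => a (i : Fin r))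

/-- `P_𝓗 = ∏_{H ∉ 𝓗} p_H`. -/
noncomputable def PH {K : Type*} [Field K] {n r : ℕ} (a : Fin r → (Fin n → K))
    (H : Finset (Fin r)) : MvPolynomial (Fin n) K :=
  ∏ i ∈ Hᶜ, lf (a i)

/-- `x^α/α!`. -/
noncomputable def monDiv (K : Type*) [Field K] (n : ℕ) (α : Fin n → ℕ) :
    MvPolynomial (Fin n) K :=
  MvPolynomial.C (((∏ j, (α j).factorial : ℕ) : K))⁻¹ * ∏ j, MvPolynomial.X j ^ α j

section AuxLemmas
variable {K : Type*} [Field K] {n : ℕ}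

lemma delOp_apply (v : Fin n → K) (p : MvPolynomial (Fin n) K) :
    delOp K n v p = ∑ j, v j • MvPolynomial.pderiv j p := by
  simp [delOp]

lemma delOp_lf (v u : Fin n → K) :
    delOp K n v (lf u) = MvPolynomial.C (∑ k, v k * u k) := by
  simp only [delOp_apply, lf, map_sum, pderiv_X, smul_eq_mul, map_mul, pderiv_C,
    zero_mul, mul_zero, Pi.single_apply, mul_ite, mul_one, mul_zero,
    MvPolynomial.smul_eq_C_mul, map_sum]
  rw [Finset.sum_comm]
  simp [Pi.single_apply, mul_comm]

lemma delOp_mul (v : Fin n → K) (p q : MvPolynomial (Fin n) K) :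
    delOp K n v (p * q) = p * delOp K n v q + q * delOp K n v p := by
  simp [delOp_apply, pderiv_mul, Finset.sum_add_distrib, mul_comm, smul_add,
    Finset.mul_sum, mul_smul_comm]

lemma delOp_prod {ι : Type*} [DecidableEq ι] (v : Fin n → K) (T : Finset ι)
    (f : ι → MvPolynomial (Fin n) K) :
    delOp K n v (∏ i ∈ T, f i) =
      ∑ i ∈ T, delOp K n v (f i) * ∏ i' ∈ T.erase i, f i' := by
  classical
  induction T using Finset.induction_on with
  | empty => simp [delOp_apply]
  | @insert a T ha ih =>
    rw [Finset.prod_insert ha, delOp_mul, ih, Finset.sum_insert ha,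
      Finset.erase_insert ha, Finset.mul_sum]
    have h2 : ∀ i ∈ T, delOp K n v (f i) * ∏ i' ∈ (insert a T).erase i, f i'
        = f a * (delOp K n v (f i) * ∏ i' ∈ T.erase i, f i') := by
      intro i hi
      rw [Finset.erase_insert_of_ne (by rintro rfl; exact ha hi),
        Finset.prod_insert (by simp [ha])]
      ring
    rw [Finset.sum_congr rfl h2]
    ring

lemma delOp_pow_card_prod {ι : Type*} [DecidableEq ι] (v : Fin n → K)
    (a : ι → Fin n → K) :
    ∀ (k : ℕ) (T : Finset ι), T.card = k →
      ((delOp K n v) ^ k) (∏ i ∈ T, lf (a i)) =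
        MvPolynomial.C ((k.factorial : K) * ∏ i ∈ T, ∑ l, v l * a i l) := by
  intro k
  induction k with
  | zero =>
    intro T hT
    rw [Finset.card_eq_zero] at hT
    subst hT
    simp
  | succ k ih =>
    intro T hT
    rw [pow_succ, Module.End.mul_apply, delOp_prod, map_sum]
    have : ∀ i ∈ T, ((delOp K n v) ^ k) (delOp K n v (lf (a i)) * ∏ i' ∈ T.erase i, lf (a i'))
        = MvPolynomial.C ((∑ l, v l * a i l) * ((k.factorial : K) * ∏ i' ∈ T.erase i, ∑ l, v l * a i' l)) := by
      intro i hi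
      rw [delOp_lf, ← MvPolynomial.smul_eq_C_mul, map_smul,
        ih (T.erase i) (by rw [Finset.card_erase_of_mem hi, hT]; rfl),
        MvPolynomial.smul_eq_C_mul, ← map_mul]
    rw [Finset.sum_congr rfl this, ← map_sum]
    congr 1
    have : ∀ i ∈ T, (∑ l, v l * a i l) * ((k.factorial : K) * ∏ i' ∈ T.erase i, ∑ l, v l * a i' l)
        = (k.factorial : K) * ∏ i' ∈ T, ∑ l, v l * a i' l := by
      intro i hi
      rw [← Finset.mul_prod_erase T _ hi]
      ring
    rw [Finset.sum_congr rfl this, Finset.sum_const, hT, nsmul_eq_mul,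
      Nat.factorial_succ, ← mul_assoc]
    push_cast
    ring


lemma pderiv_comm' (i j : Fin n) (p : MvPolynomial (Fin n) K) :
    MvPolynomial.pderiv i (MvPolynomial.pderiv j p)
      = MvPolynomial.pderiv j (MvPolynomial.pderiv i p) := by
  induction p using MvPolynomial.induction_on with
  | C a => simp
  | add p q hp hq => simp [hp, hq]
  | mul_X p k hp =>
    simp only [pderiv_mul, map_add, hp, pderiv_X, Pi.single_apply,
      apply_ite (MvPolynomial.pderiv i), apply_ite (MvPolynomial.pderiv j),
      pderiv_one, map_zero, ite_self, mul_zero, add_zero]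
    ring

lemma delOp_comm (v u : Fin n → K) :
    delOp K n v * delOp K n u = delOp K n u * delOp K n v := by
  refine LinearMap.ext fun p => ?_
  simp only [Module.End.mul_apply, delOp, LinearMap.sum_apply, LinearMap.smul_apply,
    LinearMap.coe_comp, Derivation.coeFn_coe, map_sum, map_smul]
  simp_rw [Finset.smul_sum]
  rw [Finset.sum_comm]
  refine Finset.sum_congr rfl fun i _ => Finset.sum_congr rfl fun k _ => ?_
  rw [pderiv_comm', smul_comm]

/-- `delOp` as a linear map in the coefficient vector. -/
noncomputable def delOpL (K : Type*) [Field K] (n : ℕ) :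
    (Fin n → K) →ₗ[K] Module.End K (MvPolynomial (Fin n) K) where
  toFun := delOp K n
  map_add' u v := by simp [delOp, add_smul, Finset.sum_add_distrib]
  map_smul' c u := by simp [delOp, smul_smul, Finset.smul_sum]

/-- constant coefficient as a K-linear map -/
noncomputable def ccL (K : Type*) [Field K] (n : ℕ) :
    MvPolynomial (Fin n) K →ₗ[K] K where
  toFun := MvPolynomial.constantCoeff
  map_add' p q := by simp
  map_smul' c p := by simp [MvPolynomial.constantCoeff_smul]

lemma perp_eq_zero {ι : Type*} (b : ι → (Fin n → K))
    (hspan : Submodule.span K (Set.range b) = ⊤) (v : Fin n → K)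
    (h : ∀ i, ∑ l, v l * b i l = 0) : v = 0 := by
  classical
  set L : (Fin n → K) →ₗ[K] K := ∑ l, v l • (LinearMap.proj l) with hL
  have hLu : ∀ u, L u = ∑ l, v l * u l := by
    intro u; simp [hL, LinearMap.sum_apply]
  have hLb : ∀ i, L (b i) = 0 := fun i => by rw [hLu]; exact h i
  have hL0 : L = 0 := by
    apply LinearMap.ext_on_range hspan
    simpa using hLb
  funext l
  have h2 := LinearMap.congr_fun hL0 (Pi.single l 1)
  rw [hLu] at h2
  simpa [Pi.single_apply] using h2

lemma pow_mem_span_sym {A : Type*} [CommSemiring A] [Algebra K A]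
    {τ : Type*} [Fintype τ] [DecidableEq τ] (y : τ → A) (c : τ → K) (m : ℕ) :
    (∑ q, c q • y q) ^ m ∈ Submodule.span K
      (Set.range fun s : Sym τ m => (s.toMultiset.map y).prod) := by
  induction m with
  | zero =>
    refine Submodule.subset_span ⟨(Sym.nil : Sym τ 0), by simp⟩
  | succ m ih =>
    rw [pow_succ']
    have key : Submodule.span K
        (Set.range fun s : Sym τ m => (s.toMultiset.map y).prod) ≤
        (Submodule.span K (Set.range fun s : Sym τ (m+1) =>
          (s.toMultiset.map y).prod)).comap (LinearMap.mulLeft K (∑ q, c q • y q)) := by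
      rw [Submodule.span_le]
      rintro _ ⟨s, rfl⟩
      rw [SetLike.mem_coe, Submodule.mem_comap, LinearMap.mulLeft_apply]
      rw [Finset.sum_mul]
      refine Submodule.sum_mem _ fun q _ => ?_
      rw [smul_mul_assoc]
      refine Submodule.smul_mem _ _ (Submodule.subset_span ⟨q ::ₛ s, ?_⟩)
      simp [Sym.cons, Multiset.prod_cons]
    exact key ih

end AuxLemmas
set_option maxHeartbeats 1600000 in
set_option synthInstance.maxHeartbeats 800000 in
/-- for generic `𝒜`, `m ≤ r-n+1`, `1 ≤ j ≤ n`, `𝓗 ∈ 𝒜^{(n-j)}`, and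
`𝓐' ⊆ 𝒜` with `|𝓐'| = m+n-1` and `𝓗 ⊆ 𝓐'`, the family
`{δ_{𝓗∪𝓖}^m : 𝓖 ∈ (𝓐'∖𝓗)^{(j-1)}}` is a `K`-basis of
`Δ_𝓗 = Σ_{𝓖 ∈ (𝒜∖𝓗)^{(j-1)}} K·δ_{𝓗∪𝓖}^m`, whose dimension is `binom(m+j-1, j-1)`. -/
theorem Delta_basis_and_dim
    {K : Type*} [Field K] [CharZero K] {n r m j : ℕ}
    (hn : 2 ≤ n) (hr : n ≤ r) (hm1 : 1 ≤ m) (hm : m ≤ r - n + 1)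
    (hj1 : 1 ≤ j) (hjn : j ≤ n)
    (a : Fin r → (Fin n → K)) (hgen : Generic a)
    (δ : Finset (Fin r) → (Fin n → K))
    (hδ0 : ∀ H : Finset (Fin r), H.card = n - 1 → δ H ≠ 0)
    (hδ : ∀ H : Finset (Fin r), H.card = n - 1 → ∀ i ∈ H, delOp K n (δ H) (lf (a i)) = 0)
    (𝓗 : Finset (Fin r)) (h𝓗 : 𝓗.card = n - j)
    (𝓐' : Finset (Fin r)) (h𝓐' : 𝓐'.card = m + n - 1) (hsub : 𝓗 ⊆ 𝓐') :
    (∃ b : Module.Basis {G : Finset (Fin r) // G ⊆ 𝓐' \ 𝓗 ∧ G.card = j - 1} K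
        ↥(Submodule.span K
          {θ : Module.End K (MvPolynomial (Fin n) K) |
            ∃ G : Finset (Fin r), G ⊆ 𝓗ᶜ ∧ G.card = j - 1 ∧
              θ = (delOp K n (δ (𝓗 ∪ G))) ^ m}),
      ∀ G, (b G : Module.End K (MvPolynomial (Fin n) K))
        = (delOp K n (δ (𝓗 ∪ G.val))) ^ m)
    ∧ Module.finrank K
        ↥(Submodule.span K
          {θ : Module.End K (MvPolynomial (Fin n) K) |
            ∃ G : Finset (Fin r), G ⊆ 𝓗ᶜ ∧ G.card = j - 1 ∧
              θ = (delOp K n (δ (𝓗 ∪ G))) ^ m})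
        = Nat.choose (m + j - 1) (j - 1) := by

  classical
  -- arithmetic facts
  have hcard𝓐𝓗 : (𝓐' \ 𝓗).card = m + j - 1 := by
    rw [Finset.card_sdiff_of_subset hsub, h𝓐', h𝓗]; omega
  -- Step A : perpendicularity facts
  have hperp0 : ∀ G : Finset (Fin r), G ⊆ 𝓗ᶜ → G.card = j - 1 →
      (𝓗 ∪ G).card = n - 1 ∧ (∀ i ∈ 𝓗 ∪ G, ∑ l, δ (𝓗 ∪ G) l * a i l = 0) := by
    intro G hGc hGcard
    have hdisj : Disjoint 𝓗 G := by
      rw [Finset.disjoint_left]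
      intro x hx hxG
      exact (Finset.mem_compl.mp (hGc hxG)) hx
    have hcard : (𝓗 ∪ G).card = n - 1 := by
      rw [Finset.card_union_of_disjoint hdisj, h𝓗, hGcard]; omega
    refine ⟨hcard, fun i hi => ?_⟩
    have h0 := hδ (𝓗 ∪ G) hcard i hi
    rw [delOp_lf] at h0
    have h1 : (MvPolynomial.C (∑ l, δ (𝓗 ∪ G) l * a i l) : MvPolynomial (Fin n) K)
        = MvPolynomial.C (0 : K) := by
      rw [h0, map_zero]
    exact MvPolynomial.C_injective (Fin n) K h1
  -- Step B : nonvanishing of pairings outside 𝓗 ∪ G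
  have hnz : ∀ G : Finset (Fin r), G ⊆ 𝓗ᶜ → G.card = j - 1 → ∀ i : Fin r,
      i ∉ 𝓗 ∪ G → (∑ l, δ (𝓗 ∪ G) l * a i l) ≠ 0 := by
    intro G hGc hGcard i hi hzero
    obtain ⟨hcard, hp⟩ := hperp0 G hGc hGcard
    have htcard : (insert i (𝓗 ∪ G)).card = n := by
      rw [Finset.card_insert_of_notMem hi, hcard]; omega
    have hli := hgen (insert i (𝓗 ∪ G)) htcard
    have hspan : Submodule.span K (Set.range fun x : ↥(insert i (𝓗 ∪ G)) =>
        a (x : Fin r)) = ⊤ := by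
      apply hli.span_eq_top_of_card_eq_finrank'
      rw [Fintype.card_coe, htcard, Module.finrank_fin_fun]
    have hzero' : δ (𝓗 ∪ G) = 0 := by
      apply perp_eq_zero _ hspan
      rintro ⟨x, hx⟩
      rcases Finset.mem_insert.mp hx with h | h
      · subst h; exact hzero
      · exact hp x h
    exact hδ0 (𝓗 ∪ G) hcard hzero'
  -- Step C : the chosen family and its independence
  set ι' := {G : Finset (Fin r) // G ⊆ 𝓐' \ 𝓗 ∧ G.card = j - 1} with hι'
  have hsdA : 𝓐' \ 𝓗 ⊆ 𝓗ᶜ := fun x hx =>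
    Finset.mem_compl.mpr (Finset.mem_sdiff.mp hx).2
  set θc : ι' → Module.End K (MvPolynomial (Fin n) K) :=
    fun G => (delOp K n (δ (𝓗 ∪ G.val))) ^ m with hθc
  have pair : ∀ G' G : ι',
      ccL K n ((θc G) (∏ i ∈ (𝓐' \ 𝓗) \ G'.val, lf (a i)))
        = (m.factorial : K) * ∏ i ∈ (𝓐' \ 𝓗) \ G'.val, ∑ l, δ (𝓗 ∪ G.val) l * a i l := by
    intro G' G
    have hTcard : ((𝓐' \ 𝓗) \ G'.val).card = m := by
      rw [Finset.card_sdiff_of_subset G'.2.1, hcard𝓐𝓗, G'.2.2]; omega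
    simp only [hθc]
    rw [delOp_pow_card_prod (δ (𝓗 ∪ G.val)) a m _ hTcard]
    exact MvPolynomial.constantCoeff_C _ _
  have hdiag : ∀ G' : ι',
      (m.factorial : K) * (∏ i ∈ (𝓐' \ 𝓗) \ G'.val, ∑ l, δ (𝓗 ∪ G'.val) l * a i l) ≠ 0 := by
    intro G'
    refine mul_ne_zero (by exact_mod_cast Nat.factorial_ne_zero m) ?_
    rw [Finset.prod_ne_zero_iff]
    intro i hi
    have hi1 := Finset.mem_sdiff.mp hi
    have hi2 := Finset.mem_sdiff.mp hi1.1
    refine hnz G'.val (fun x hx => hsdA (G'.2.1 hx)) G'.2.2 i ?_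
    intro hmem
    rcases Finset.mem_union.mp hmem with h | h
    · exact hi2.2 h
    · exact hi1.2 h
  have hoff : ∀ G' G : ι', G ≠ G' →
      (∏ i ∈ (𝓐' \ 𝓗) \ G'.val, ∑ l, δ (𝓗 ∪ G.val) l * a i l) = 0 := by
    intro G' G hne
    have hnsub : ¬ (G.val ⊆ G'.val) := by
      intro hsub'
      exact hne (Subtype.ext (Finset.eq_of_subset_of_card_le hsub'
        (by rw [G.2.2, G'.2.2])))
    obtain ⟨i, hiG, hiG'⟩ := Finset.not_subset.mp hnsub
    have hiT : i ∈ (𝓐' \ 𝓗) \ G'.val := Finset.mem_sdiff.mpr ⟨G.2.1 hiG, hiG'⟩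
    refine Finset.prod_eq_zero hiT ?_
    exact (hperp0 G.val (fun x hx => hsdA (G.2.1 hx)) G.2.2).2 i
      (Finset.mem_union_right _ hiG)
  have hindep : LinearIndependent K θc := by
    rw [Fintype.linearIndependent_iff]
    intro g hg G'
    have h2 := congrArg (fun θ : Module.End K (MvPolynomial (Fin n) K) =>
      ccL K n (θ (∏ i ∈ (𝓐' \ 𝓗) \ G'.val, lf (a i)))) hg
    simp only [LinearMap.sum_apply, LinearMap.smul_apply, map_sum, map_smul,
      LinearMap.zero_apply, map_zero, smul_eq_mul] at h2
    rw [Finset.sum_congr rfl (fun G _ => by rw [pair G' G])] at h2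
    rw [Finset.sum_eq_single G'] at h2
    · rcases mul_eq_zero.mp h2 with h | h
      · exact h
      · exact absurd h (hdiag G')
    · intro G _ hne
      rw [hoff G' G hne, mul_zero, mul_zero]
    · intro h; exact absurd (Finset.mem_univ G') h
  -- Step D : cardinality of the index type
  have hcardι : Fintype.card ι' = (m + j - 1).choose (j - 1) := by
    rw [Fintype.card_subtype]
    have hfilter : Finset.univ.filter
        (fun G : Finset (Fin r) => G ⊆ 𝓐' \ 𝓗 ∧ G.card = j - 1)
        = Finset.powersetCard (j - 1) (𝓐' \ 𝓗) := by
      ext G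
      simp [Finset.mem_powersetCard]
    rw [hfilter, Finset.card_powersetCard, hcard𝓐𝓗]
  -- Step E : a small spanning family for the annihilator
  obtain ⟨s, hs𝓗, hscard⟩ := Finset.exists_superset_card_eq (n := n)
    (by rw [h𝓗]; omega) (by simpa using hr) (s := 𝓗)
  have hcardτ : Fintype.card ↥(s \ 𝓗) = j := by
    rw [Fintype.card_coe, Finset.card_sdiff_of_subset hs𝓗, hscard, h𝓗]; omega
  set dotL : (Fin n → K) → ((Fin n → K) →ₗ[K] K) :=
    fun u => ∑ l, u l • LinearMap.proj l with hdotL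
  have dotL_apply : ∀ u v : Fin n → K, dotL u v = ∑ l, v l * u l := by
    intro u v
    simp [hdotL, mul_comm]
  set Ψ : (Fin n → K) →ₗ[K] (↥s → K) :=
    LinearMap.pi (fun i => dotL (a i.1)) with hΨ
  have hΨapply : ∀ (v : Fin n → K) (i : ↥s),
      Ψ v i = ∑ l, v l * a i.1 l := by
    intro v i
    rw [hΨ, LinearMap.pi_apply, dotL_apply]
  have hinj : Function.Injective Ψ := by
    rw [← LinearMap.ker_eq_bot]
    rw [Submodule.eq_bot_iff]
    intro v hv
    have hspan : Submodule.span K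
        (Set.range fun x : ↥s => a (x : Fin r)) = ⊤ := by
      apply (hgen s hscard).span_eq_top_of_card_eq_finrank'
      rw [Fintype.card_coe, hscard, Module.finrank_fin_fun]
    refine perp_eq_zero _ hspan v fun i => ?_
    rw [← hΨapply v i]
    rw [LinearMap.mem_ker] at hv
    rw [hv]; rfl
  have hsurj : Function.Surjective Ψ := by
    have hfr : Module.finrank K (Fin n → K)
        = Module.finrank K (↥s → K) := by
      rw [Module.finrank_fin_fun, Module.finrank_pi, Fintype.card_coe, hscard]
    exact (LinearMap.injective_iff_surjective_of_finrank_eq_finrank hfr).mp hinj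
  set e := LinearEquiv.ofBijective Ψ ⟨hinj, hsurj⟩ with he
  set w : ↥(s \ 𝓗) → (Fin n → K) :=
    fun q => e.symm (Pi.single (⟨q.1, (Finset.mem_sdiff.mp q.2).1⟩ : ↥s) 1)
    with hw
  have hW : ∀ v : Fin n → K, (∀ i ∈ 𝓗, ∑ l, v l * a i l = 0) →
      v ∈ Submodule.span K (Set.range w) := by
    intro v hv
    have hv2 : v = ∑ i : ↥s, (Ψ v i) • e.symm (Pi.single i 1) := by
      have hsum : Ψ v = ∑ i : ↥s, Ψ v i • (Pi.single i (1 : K) : ↥s → K) := by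
        rw [← Finset.univ_sum_single (Ψ v)]
        refine Finset.sum_congr rfl fun i _ => ?_
        funext x
        by_cases hx : x = i <;> simp [Pi.single_apply, hx]
      have hvv : v = e.symm (Ψ v) := (e.symm_apply_apply v).symm
      conv_lhs => rw [hvv, hsum]
      rw [map_sum]
      simp only [map_smul]
    rw [hv2]
    refine Submodule.sum_mem _ fun i _ => ?_
    by_cases hmem : i.1 ∈ 𝓗
    · have : Ψ v i = 0 := by rw [hΨapply]; exact hv i.1 hmem
      rw [this, zero_smul]
      exact Submodule.zero_mem _
    · have hit : i.1 ∈ s \ 𝓗 := Finset.mem_sdiff.mpr ⟨i.2, hmem⟩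
      have : e.symm (Pi.single i 1) = w ⟨i.1, hit⟩ := by
        rw [hw]
      rw [this]
      exact Submodule.smul_mem _ _ (Submodule.subset_span (Set.mem_range_self _))
  -- Step F : the commutative algebra of constant-coefficient operators
  set D : ↥(s \ 𝓗) → Module.End K (MvPolynomial (Fin n) K) :=
    fun q => delOp K n (w q) with hD
  have hDcomm : ∀ x ∈ Set.range D, ∀ z ∈ Set.range D, x * z = z * x := by
    rintro _ ⟨q, rfl⟩ _ ⟨q', rfl⟩
    exact delOp_comm _ _
  letI : CommSemiring ↥(Algebra.adjoin K (Set.range D)) :=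
    Algebra.adjoinCommSemiringOfComm K hDcomm
  set DA : ↥(s \ 𝓗) → ↥(Algebra.adjoin K (Set.range D)) :=
    fun q => ⟨D q, Algebra.subset_adjoin (Set.mem_range_self q)⟩ with hDA
  set U : Submodule K (Module.End K (MvPolynomial (Fin n) K)) :=
    Submodule.span K (Set.range fun sm : Sym ↥(s \ 𝓗) m =>
      (((sm.toMultiset.map DA).prod : ↥(Algebra.adjoin K (Set.range D)))
        : Module.End K (MvPolynomial (Fin n) K))) with hU'
  have hU : ∀ v : Fin n → K, v ∈ Submodule.span K (Set.range w) →
      (delOp K n v) ^ m ∈ U := by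
    intro v hv
    obtain ⟨c, hc⟩ := (Submodule.mem_span_range_iff_exists_fun K).mp hv
    have hdel : delOp K n v = ∑ q, c q • D q := by
      have h1 : delOp K n v = delOpL K n v := rfl
      rw [h1, ← hc, map_sum]
      simp [hD, delOpL]
      rfl
    have hsum : (((∑ q, c q • DA q : ↥(Algebra.adjoin K (Set.range D))))
        : Module.End K (MvPolynomial (Fin n) K)) = delOp K n v := by
      rw [hdel]
      simp [hDA]
    have hpow := pow_mem_span_sym (K := K) DA c m
    have hmap := Submodule.mem_map_of_mem
      (f := (Algebra.adjoin K (Set.range D)).val.toLinearMap) hpow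
    rw [Submodule.map_span, ← Set.range_comp] at hmap
    have himg : (delOp K n v) ^ m
        = (Algebra.adjoin K (Set.range D)).val.toLinearMap ((∑ q, c q • DA q) ^ m) := by
      rw [AlgHom.toLinearMap_apply, map_pow]
      rw [show ((Algebra.adjoin K (Set.range D)).val ((∑ q, c q • DA q)) : Module.End K (MvPolynomial (Fin n) K)) = delOp K n v from hsum]
    rw [himg]
    exact hmap
  -- finiteness and rank bound for U
  haveI hfdU : FiniteDimensional K U :=
    FiniteDimensional.span_of_finite K (Set.finite_range _)
  have hfinU : Module.finrank K U ≤ (m + j - 1).choose (j - 1) := by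
    have h1 := finrank_range_le_card (R := K) (fun sm : Sym ↥(s \ 𝓗) m =>
      (((sm.toMultiset.map DA).prod : ↥(Algebra.adjoin K (Set.range D)))
        : Module.End K (MvPolynomial (Fin n) K)))
    rw [Set.finrank] at h1
    refine le_trans h1 ?_
    rw [Sym.card_sym_eq_choose, hcardτ]
    have h2 : j + m - 1 = m + j - 1 := by omega
    have h3 : (m + j - 1) - m = j - 1 := by omega
    rw [h2, ← h3, Nat.choose_symm (by omega)]
  -- Step H : generators lie in U
  have hSU : ∀ θ ∈ {θ : Module.End K (MvPolynomial (Fin n) K) |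
      ∃ G : Finset (Fin r), G ⊆ 𝓗ᶜ ∧ G.card = j - 1 ∧
        θ = (delOp K n (δ (𝓗 ∪ G))) ^ m}, θ ∈ U := by
    rintro θ ⟨G, hGc, hGcard, rfl⟩
    exact hU _ (hW _ (fun i hi => (hperp0 G hGc hGcard).2 i (Finset.mem_union_left _ hi)))
  have hspanU : Submodule.span K {θ : Module.End K (MvPolynomial (Fin n) K) |
      ∃ G : Finset (Fin r), G ⊆ 𝓗ᶜ ∧ G.card = j - 1 ∧
        θ = (delOp K n (δ (𝓗 ∪ G))) ^ m} ≤ U := Submodule.span_le.mpr hSU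
  -- Step I : assembly
  have hθcS : ∀ G : ι', θc G ∈ {θ : Module.End K (MvPolynomial (Fin n) K) |
      ∃ G : Finset (Fin r), G ⊆ 𝓗ᶜ ∧ G.card = j - 1 ∧
        θ = (delOp K n (δ (𝓗 ∪ G))) ^ m} :=
    fun G => ⟨G.1, fun x hx => hsdA (G.2.1 hx), G.2.2, rfl⟩
  have hle : Submodule.span K (Set.range θc) ≤ Submodule.span K
      {θ : Module.End K (MvPolynomial (Fin n) K) |
        ∃ G : Finset (Fin r), G ⊆ 𝓗ᶜ ∧ G.card = j - 1 ∧
          θ = (delOp K n (δ (𝓗 ∪ G))) ^ m} := by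
    apply Submodule.span_mono
    rintro _ ⟨G, rfl⟩
    exact hθcS G
  haveI : FiniteDimensional K (Submodule.span K
      {θ : Module.End K (MvPolynomial (Fin n) K) |
        ∃ G : Finset (Fin r), G ⊆ 𝓗ᶜ ∧ G.card = j - 1 ∧
          θ = (delOp K n (δ (𝓗 ∪ G))) ^ m}) :=
    Submodule.finiteDimensional_of_le hspanU
  have hfrθ : Module.finrank K (Submodule.span K (Set.range θc)) = Fintype.card ι' :=
    finrank_span_eq_card hindep
  have hfrS : Module.finrank K (Submodule.span K
      {θ : Module.End K (MvPolynomial (Fin n) K) |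
        ∃ G : Finset (Fin r), G ⊆ 𝓗ᶜ ∧ G.card = j - 1 ∧
          θ = (delOp K n (δ (𝓗 ∪ G))) ^ m}) ≤ Fintype.card ι' := by
    refine le_trans (Submodule.finrank_mono hspanU) (le_trans hfinU ?_)
    rw [hcardι]
  have heq : Submodule.span K (Set.range θc) = Submodule.span K
      {θ : Module.End K (MvPolynomial (Fin n) K) |
        ∃ G : Finset (Fin r), G ⊆ 𝓗ᶜ ∧ G.card = j - 1 ∧
          θ = (delOp K n (δ (𝓗 ∪ G))) ^ m} :=
    Submodule.eq_of_le_of_finrank_le hle (by rw [hfrθ]; exact hfrS)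
  constructor
  · refine ⟨(Module.Basis.span hindep).map (LinearEquiv.ofEq _ _ heq), fun G => ?_⟩
    rw [Module.Basis.map_apply]
    have : ((LinearEquiv.ofEq _ _ heq) ((Module.Basis.span hindep) G)
        : Module.End K (MvPolynomial (Fin n) K))
        = ((Module.Basis.span hindep) G : Module.End K (MvPolynomial (Fin n) K)) := rfl
    rw [this, Module.Basis.span_apply]
  · rw [← heq, hfrθ, hcardι]
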